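/- Let k be an algebraically closed field of characteristic 2 and let λ ∈ k satisfy λ ≠ 0 and λ³ ≠ 1. Then the set of homogeneous polynomials H ∈ k[X,Y,Z] of degree 3 such that H·(X³+Y³+Z³+λXYZ) lies in the ideal (X⁴, Y⁴, Z⁴) of k[X,Y,Z] is a one-dimensional k-vector space, spanned by H = X³+Y³+Z³ (for which (X³+Y³+Z³)(X³+Y³+Z³+λXYZ) = X⁴(X²+λYZ) + Y⁴(Y²+λXZ) + Z⁴(Z²+λXY)). -/

import Mathlib

open MvPolynomial


noncomputable def e3 (a b c : ℕ) : Fin 3 →₀ ℕ :=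
  Finsupp.single 0 a + Finsupp.single 1 b + Finsupp.single 2 c

lemma e3_apply0 (a b c : ℕ) : e3 a b c 0 = a := by simp [e3, Finsupp.single_apply]
lemma e3_apply1 (a b c : ℕ) : e3 a b c 1 = b := by simp [e3, Finsupp.single_apply]
lemma e3_apply2 (a b c : ℕ) : e3 a b c 2 = c := by simp [e3, Finsupp.single_apply]

lemma e3_sub0 (a b c n : ℕ) : e3 a b c - Finsupp.single 0 n = e3 (a - n) b c := by
  ext i; fin_cases i <;> simp [e3, Finsupp.single_apply]
lemma e3_sub1 (a b c n : ℕ) : e3 a b c - Finsupp.single 1 n = e3 a (b - n) c := by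
  ext i; fin_cases i <;> simp [e3, Finsupp.single_apply]
lemma e3_sub2 (a b c n : ℕ) : e3 a b c - Finsupp.single 2 n = e3 a b (c - n) := by
  ext i; fin_cases i <;> simp [e3, Finsupp.single_apply]
lemma e3_sub111 (a b c : ℕ) : e3 a b c - e3 1 1 1 = e3 (a-1) (b-1) (c-1) := by
  ext i; fin_cases i <;> simp [e3, Finsupp.single_apply]

lemma e3_le111 (a b c : ℕ) : e3 1 1 1 ≤ e3 a b c ↔ 1 ≤ a ∧ 1 ≤ b ∧ 1 ≤ c := by
  rw [Finsupp.le_def]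
  constructor
  · intro h
    have h0 := h 0; have h1 := h 1; have h2 := h 2
    rw [e3_apply0, e3_apply0] at h0; rw [e3_apply1, e3_apply1] at h1
    rw [e3_apply2, e3_apply2] at h2
    exact ⟨h0, h1, h2⟩
  · rintro ⟨h0, h1, h2⟩ i
    fin_cases i <;> simp [e3_apply0, e3_apply1, e3_apply2, e3, Finsupp.single_apply, h0, h1, h2]

lemma e3_eta (m : Fin 3 →₀ ℕ) : e3 (m 0) (m 1) (m 2) = m := by
  ext i; fin_cases i <;> simp [e3, Finsupp.single_apply]

lemma single_eq_e3_iff (n a b c : ℕ) (i : Fin 3) :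
    Finsupp.single i n = e3 a b c ↔ e3 a b c i = n ∧ (∀ j, j ≠ i → e3 a b c j = 0) := by
  constructor
  · intro h; rw [← h]; exact ⟨by simp, fun j hj => by simp [Finsupp.single_apply, hj.symm]⟩
  · rintro ⟨h1, h2⟩; ext j
    by_cases hj : j = i
    · subst hj; simp [h1]
    · simp [Finsupp.single_apply, Ne.symm hj, h2 j hj]

lemma single0_eq_e3 (n a b c : ℕ) :
    Finsupp.single (0 : Fin 3) n = e3 a b c ↔ a = n ∧ b = 0 ∧ c = 0 := by
  rw [single_eq_e3_iff]
  constructor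
  · rintro ⟨h1, h2⟩
    refine ⟨by rw [← e3_apply0 a b c, h1], ?_, ?_⟩
    · have := h2 1 (by decide); rwa [e3_apply1] at this
    · have := h2 2 (by decide); rwa [e3_apply2] at this
  · rintro ⟨rfl, rfl, rfl⟩
    exact ⟨e3_apply0 _ _ _, fun j hj => by fin_cases j <;> simp_all [e3_apply1, e3_apply2]⟩

lemma single1_eq_e3 (n a b c : ℕ) :
    Finsupp.single (1 : Fin 3) n = e3 a b c ↔ a = 0 ∧ b = n ∧ c = 0 := by
  rw [single_eq_e3_iff]
  constructor
  · rintro ⟨h1, h2⟩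
    refine ⟨?_, by rw [← e3_apply1 a b c, h1], ?_⟩
    · have := h2 0 (by decide); rwa [e3_apply0] at this
    · have := h2 2 (by decide); rwa [e3_apply2] at this
  · rintro ⟨rfl, rfl, rfl⟩
    exact ⟨e3_apply1 _ _ _, fun j hj => by fin_cases j <;> simp_all [e3_apply0, e3_apply2]⟩

lemma single2_eq_e3 (n a b c : ℕ) :
    Finsupp.single (2 : Fin 3) n = e3 a b c ↔ a = 0 ∧ b = 0 ∧ c = n := by
  rw [single_eq_e3_iff]
  constructor
  · rintro ⟨h1, h2⟩
    refine ⟨?_, ?_, by rw [← e3_apply2 a b c, h1]⟩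
    · have := h2 0 (by decide); rwa [e3_apply0] at this
    · have := h2 1 (by decide); rwa [e3_apply1] at this
  · rintro ⟨rfl, rfl, rfl⟩
    exact ⟨e3_apply2 _ _ _, fun j hj => by fin_cases j <;> simp_all [e3_apply0, e3_apply1]⟩

lemma e3_degree (a b c : ℕ) : (e3 a b c).degree = a + b + c := by
  rw [Finsupp.degree_apply, Finset.sum_subset (Finset.subset_univ _)]
  · simp [Fin.sum_univ_three, e3_apply0, e3_apply1, e3_apply2]
  · intro x _ h; simpa using h

lemma xyz_monomial (k : Type*) [CommSemiring k] (l : k) :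
    MvPolynomial.C l * (X 0 * X 1 * X 2) = monomial (e3 1 1 1) l := by
  rw [e3, X, X, X]
  simp only [monomial_mul, one_mul, C_mul_monomial, mul_one]

lemma coeff_mulF (k : Type*) [CommSemiring k] (H : MvPolynomial (Fin 3) k) (l : k) (a b c : ℕ) :
    coeff (e3 a b c)
      (H * (X 0 ^ 3 + X 1 ^ 3 + X 2 ^ 3 + MvPolynomial.C l * (X 0 * X 1 * X 2))) =
      (if 3 ≤ a then coeff (e3 (a-3) b c) H else 0)
      + (if 3 ≤ b then coeff (e3 a (b-3) c) H else 0)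
      + (if 3 ≤ c then coeff (e3 a b (c-3)) H else 0)
      + (if 1 ≤ a ∧ 1 ≤ b ∧ 1 ≤ c then coeff (e3 (a-1) (b-1) (c-1)) H * l else 0) := by
  rw [xyz_monomial, X_pow_eq_monomial, X_pow_eq_monomial, X_pow_eq_monomial,
    mul_add, mul_add, mul_add, coeff_add, coeff_add, coeff_add,
    coeff_mul_monomial', coeff_mul_monomial', coeff_mul_monomial', coeff_mul_monomial']
  simp only [Finsupp.single_le_iff, e3_apply0, e3_apply1, e3_apply2,
    e3_sub0, e3_sub1, e3_sub2, e3_le111, e3_sub111, mul_one]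

lemma coeff_zero_of_mem (k : Type*) [CommSemiring k] (p : MvPolynomial (Fin 3) k)
    (hp : p ∈ Ideal.span {(X 0 ^ 4 : MvPolynomial (Fin 3) k), X 1 ^ 4, X 2 ^ 4})
    (m : Fin 3 →₀ ℕ) (h0 : m 0 < 4) (h1 : m 1 < 4) (h2 : m 2 < 4) :
    coeff m p = 0 := by
  rw [show ({(X 0 ^ 4 : MvPolynomial (Fin 3) k), X 1 ^ 4, X 2 ^ 4} : Set _)
      = insert (X 0 ^ 4) (insert (X 1 ^ 4) {X 2 ^ 4}) from rfl] at hp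
  rw [Ideal.span, Submodule.mem_span_insert] at hp
  obtain ⟨A, z1, hz1, rfl⟩ := hp
  rw [Submodule.mem_span_insert] at hz1
  obtain ⟨B, z2, hz2, rfl⟩ := hz1
  rw [← Ideal.span, Ideal.mem_span_singleton] at hz2
  obtain ⟨D, rfl⟩ := hz2
  rw [smul_eq_mul, smul_eq_mul, mul_comm (X 2 ^ 4) D]
  rw [coeff_add, coeff_add, X_pow_eq_monomial, X_pow_eq_monomial, X_pow_eq_monomial,
    coeff_mul_monomial', coeff_mul_monomial', coeff_mul_monomial',
    if_neg (by rw [Finsupp.single_le_iff]; omega),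
    if_neg (by rw [Finsupp.single_le_iff]; omega),
    if_neg (by rw [Finsupp.single_le_iff]; omega)]
  ring

lemma degree_eq3 (m : Fin 3 →₀ ℕ) : m.degree = m 0 + m 1 + m 2 := by
  rw [Finsupp.degree_apply, Finset.sum_subset (Finset.subset_univ _)]
  · simp [Fin.sum_univ_three]
  · intro x _ h; simpa using h


/-- Over an algebraically closed field of characteristic `2`, for `λ ≠ 0` with `λ³ ≠ 1`,
the space of homogeneous polynomials `H` of degree `3` with
`H·(X³+Y³+Z³+λXYZ) ∈ (X⁴,Y⁴,Z⁴)` is one-dimensional, spanned by `H = X³+Y³+Z³`. -/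
theorem hasse_one_cubic_degree_six_syzygies_char_two
    (k : Type*) [Field k] [IsAlgClosed k] [CharP k 2]
    (l : k) (hl : l ≠ 0) (hl3 : l ^ 3 ≠ 1) :
    ((X 0 ^ 3 + X 1 ^ 3 + X 2 ^ 3) *
        (X 0 ^ 3 + X 1 ^ 3 + X 2 ^ 3 + MvPolynomial.C l * (X 0 * X 1 * X 2)) ∈
        Ideal.span {(X 0 ^ 4 : MvPolynomial (Fin 3) k), X 1 ^ 4, X 2 ^ 4}) ∧
      ∀ H : MvPolynomial (Fin 3) k, H.IsHomogeneous 3 →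
        H * (X 0 ^ 3 + X 1 ^ 3 + X 2 ^ 3 + MvPolynomial.C l * (X 0 * X 1 * X 2)) ∈
          Ideal.span {(X 0 ^ 4 : MvPolynomial (Fin 3) k), X 1 ^ 4, X 2 ^ 4} →
        ∃ c : k, H = c • (X 0 ^ 3 + X 1 ^ 3 + X 2 ^ 3) := by
  have h2k : (2 : k) = 0 := by exact_mod_cast CharP.cast_eq_zero k 2
  have h2 : (2 : MvPolynomial (Fin 3) k) = 0 := by
    exact_mod_cast CharP.cast_eq_zero (MvPolynomial (Fin 3) k) 2
  constructor
  · have key : (X 0^3+X 1^3+X 2^3 : MvPolynomial (Fin 3) k) *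
        (X 0^3+X 1^3+X 2^3 + MvPolynomial.C l*(X 0*X 1*X 2)) =
        (X 0^2 + MvPolynomial.C l * (X 1 * X 2)) * X 0^4
        + (X 1^2 + MvPolynomial.C l * (X 0 * X 2)) * X 1^4
        + (X 2^2 + MvPolynomial.C l * (X 0 * X 1)) * X 2^4 := by
      linear_combination (X 0^3*X 1^3 + X 0^3*X 2^3 + X 1^3*X 2^3 : MvPolynomial (Fin 3) k) * h2
    rw [key]
    exact add_mem (add_mem (Ideal.mul_mem_left _ _ (Ideal.subset_span (by simp)))
      (Ideal.mul_mem_left _ _ (Ideal.subset_span (by simp))))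
      (Ideal.mul_mem_left _ _ (Ideal.subset_span (by simp)))
  · intro H hH hmem
    have hz : ∀ a b c : ℕ, a < 4 → b < 4 → c < 4 →
        (if 3 ≤ a then coeff (e3 (a-3) b c) H else 0)
        + (if 3 ≤ b then coeff (e3 a (b-3) c) H else 0)
        + (if 3 ≤ c then coeff (e3 a b (c-3)) H else 0)
        + (if 1 ≤ a ∧ 1 ≤ b ∧ 1 ≤ c then coeff (e3 (a-1) (b-1) (c-1)) H * l else 0) = 0 :=
      fun a b c ha hb hc => by
        rw [← coeff_mulF]
        exact coeff_zero_of_mem k _ hmem _ (by rw [e3_apply0]; omega)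
          (by rw [e3_apply1]; omega) (by rw [e3_apply2]; omega)
    have E330 := hz 3 3 0 (by norm_num) (by norm_num) (by norm_num)
    have E303 := hz 3 0 3 (by norm_num) (by norm_num) (by norm_num)
    have E321 := hz 3 2 1 (by norm_num) (by norm_num) (by norm_num)
    have E312 := hz 3 1 2 (by norm_num) (by norm_num) (by norm_num)
    have E231 := hz 2 3 1 (by norm_num) (by norm_num) (by norm_num)
    have E132 := hz 1 3 2 (by norm_num) (by norm_num) (by norm_num)
    have E213 := hz 2 1 3 (by norm_num) (by norm_num) (by norm_num)
    have E123 := hz 1 2 3 (by norm_num) (by norm_num) (by norm_num)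
    have E222 := hz 2 2 2 (by norm_num) (by norm_num) (by norm_num)
    norm_num at E330 E303 E321 E312 E231 E132 E213 E123 E222
    have he : coeff (e3 1 1 1) H = 0 := E222.resolve_right hl
    have hne : (1 : k) + l ^ 3 ≠ 0 := fun h => hl3 (by linear_combination h - h2k)
    have hb1 : coeff (e3 2 1 0) H = 0 := by
      have h : coeff (e3 2 1 0) H * (1 + l ^ 3) = 0 := by
        linear_combination E213 - l * E132 + l ^ 2 * E321
      exact (mul_eq_zero.mp h).resolve_right hne
    have hb4 : coeff (e3 0 2 1) H = 0 := by linear_combination E321 - l * hb1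
    have hb5 : coeff (e3 1 0 2) H = 0 := by linear_combination E132 - l * hb4
    have hb2 : coeff (e3 2 0 1) H = 0 := by
      have h : coeff (e3 2 0 1) H * (1 + l ^ 3) = 0 := by
        linear_combination E231 - l * E123 + l ^ 2 * E312
      exact (mul_eq_zero.mp h).resolve_right hne
    have hb6 : coeff (e3 0 1 2) H = 0 := by linear_combination E312 - l * hb2
    have hb3 : coeff (e3 1 2 0) H = 0 := by linear_combination E123 - l * hb6
    have ha2 : coeff (e3 0 3 0) H = coeff (e3 3 0 0) H := by
      linear_combination E330 - coeff (e3 3 0 0) H * h2k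
    have ha3 : coeff (e3 0 0 3) H = coeff (e3 3 0 0) H := by
      linear_combination E303 - coeff (e3 3 0 0) H * h2k
    refine ⟨coeff (e3 3 0 0) H, ?_⟩
    have hx : ∀ i : Fin 3, (X i ^ 3 : MvPolynomial (Fin 3) k).IsHomogeneous 3 :=
      fun i => by simpa using (isHomogeneous_X k i).pow 3
    have hG : (X 0 ^ 3 + X 1 ^ 3 + X 2 ^ 3 : MvPolynomial (Fin 3) k).IsHomogeneous 3 :=
      ((hx 0).add (hx 1)).add (hx 2)
    have hcG : ((coeff (e3 3 0 0) H) •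
        (X 0 ^ 3 + X 1 ^ 3 + X 2 ^ 3 : MvPolynomial (Fin 3) k)).IsHomogeneous 3 := by
      rw [smul_eq_C_mul]
      simpa using (isHomogeneous_C _ _).mul hG
    ext m
    by_cases h3 : m 0 + m 1 + m 2 = 3
    · obtain ⟨a, ha⟩ : ∃ a, a = m 0 := ⟨_, rfl⟩
      obtain ⟨b, hb⟩ : ∃ b, b = m 1 := ⟨_, rfl⟩
      obtain ⟨c, hc⟩ : ∃ c, c = m 2 := ⟨_, rfl⟩
      have hm : e3 a b c = m := by rw [ha, hb, hc]; exact e3_eta m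
      rw [← ha, ← hb, ← hc] at h3
      rw [← hm]
      have hA : a ≤ 3 := by omega
      have hB : b ≤ 3 := by omega
      have hC : c ≤ 3 := by omega
      clear ha hb hc hm
      interval_cases a <;> interval_cases b <;> interval_cases c <;>
        first
          | omega
          | (simp only [coeff_smul, smul_eq_mul, coeff_add, coeff_X_pow,
              single0_eq_e3, single1_eq_e3, single2_eq_e3]
             norm_num [hb1, hb2, hb3, hb4, hb5, hb6, he, ha2, ha3])
    · have hdeg : m.degree ≠ 3 := by rw [degree_eq3]; exact h3
      rw [hH.coeff_eq_zero hdeg, hcG.coeff_eq_zero hdeg]
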